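/- Fractional Grönwall–Bellman inequality (base form): Let T > 0, α ∈ (0,1), and a, b > 0. Let u ∈ L¹(0,T) be nonnegative almost everywhere and suppose that u(t) ≤ a + b (g_α * u)(t) for almost every t ∈ (0,T). Then there exists a constant C, depending only on α, b and T (and not on a or u), such that u(t) ≤ a·C for almost every t ∈ (0,T). -/

import Mathlib

open MeasureTheory Set
open scoped ENNReal

/-- The Riemann–Liouville kernel `g_α(t) = t^(α-1)/Γ(α)`. -/
noncomputable def rlKernel (α t : ℝ) : ℝ := t ^ (α - 1) / Real.Gamma α

/-- Convolution on the half line: `(f * h)(t) = ∫₀ᵗ f(t-s) h(s) ds`. -/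
noncomputable def conv (f h : ℝ → ℝ) (t : ℝ) : ℝ := ∫ s in (0:ℝ)..t, f (t - s) * h s


lemma lintegral_Ioo_shift (g : ℝ → ℝ≥0∞) (c a b : ℝ) :
    ∫⁻ t in Ioo a b, g (t - c) = ∫⁻ t in Ioo (a - c) (b - c), g t := by
  have h := (measurePreserving_sub_right (volume : Measure ℝ) c).setLIntegral_comp_emb
    (MeasurableEquiv.subRight c).measurableEmbedding g (Ioo a b)
  rw [h]
  congr 1
  exact congrArg volume.restrict (image_sub_const_Ioo c a b)

lemma lintegral_Ioo_reflect (g : ℝ → ℝ≥0∞) (c a b : ℝ) :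
    ∫⁻ t in Ioo a b, g (c - t) = ∫⁻ t in Ioo (c - b) (c - a), g t := by
  have h := (Measure.measurePreserving_sub_left (volume : Measure ℝ) c).setLIntegral_comp_emb
    (MeasurableEquiv.subLeft c).measurableEmbedding g (Ioo a b)
  rw [h]
  congr 1
  exact congrArg volume.restrict (image_const_sub_Ioo c a b)

lemma lintegral_Ioo_rpow (β l : ℝ) (hβ : 0 < β) (hl : 0 ≤ l) :
    ∫⁻ τ in Ioo 0 l, ENNReal.ofReal (τ ^ (β - 1)) ≤ ENNReal.ofReal (l ^ β / β) := by
  have hint : IntervalIntegrable (fun x : ℝ => x ^ (β - 1)) volume 0 l :=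
    intervalIntegral.intervalIntegrable_rpow' (by linarith)
  have hi : IntegrableOn (fun τ : ℝ => τ ^ (β - 1)) (Ioo 0 l) :=
    ((intervalIntegrable_iff_integrableOn_Ioc_of_le hl).1 hint).mono_set Ioo_subset_Ioc_self
  have hnn : 0 ≤ᵐ[volume.restrict (Ioo 0 l)] fun τ : ℝ => τ ^ (β - 1) :=
    (ae_restrict_iff' measurableSet_Ioo).2 (Filter.Eventually.of_forall
      fun τ hτ => Real.rpow_nonneg hτ.1.le _)
  rw [← ofReal_integral_eq_lintegral_ofReal hi hnn]
  apply ENNReal.ofReal_le_ofReal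
  have h1 : ∫ τ in Ioo (0:ℝ) l, τ ^ (β - 1) = ∫ x in (0:ℝ)..l, x ^ (β - 1) := by
    rw [intervalIntegral.integral_of_le hl, integral_Ioc_eq_integral_Ioo]
  rw [h1, integral_rpow (Or.inl (by linarith))]
  rw [sub_add_cancel, Real.zero_rpow hβ.ne']; simp

lemma swap_lemma (X : ℝ) (hX : 0 < X) (w k V : ℝ → ℝ≥0∞)
    (hw : Measurable w) (hk : Measurable k) (hV : Measurable V) :
    ∫⁻ s in Ioo 0 X, w s * ∫⁻ r in Ioo 0 s, k (s - r) * V r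
      = ∫⁻ r in Ioo 0 X, V r * ∫⁻ s in Ioo r X, w s * k (s - r) := by
  set H : ℝ → ℝ → ℝ≥0∞ := fun s r => if r < s then w s * (k (s - r) * V r) else 0 with hH
  have hHm : Measurable (Function.uncurry H) := by
    apply Measurable.ite (measurableSet_lt measurable_snd measurable_fst)
    · exact (hw.comp measurable_fst).mul
        ((hk.comp (measurable_fst.sub measurable_snd)).mul (hV.comp measurable_snd))
    · exact measurable_const
  have hA : ∀ s ∈ Ioo (0:ℝ) X,
      ∫⁻ r in Ioo 0 X, H s r = w s * ∫⁻ r in Ioo 0 s, k (s - r) * V r := by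
    intro s hs
    have hsplit : Ioo (0:ℝ) X = Ioo 0 s ∪ Ico s X := (Ioo_union_Ico_eq_Ioo hs.1 hs.2.le).symm
    rw [hsplit, lintegral_union measurableSet_Ico (by rw [Set.disjoint_left]; rintro x ⟨_, h2⟩ ⟨h3, _⟩; exact absurd h3 (not_le.2 h2))]
    have h1 : ∫⁻ r in Ioo 0 s, H s r = ∫⁻ r in Ioo 0 s, w s * (k (s - r) * V r) := by
      apply setLIntegral_congr_fun measurableSet_Ioo
      exact fun r hr => if_pos hr.2
    have h2 : ∫⁻ r in Ico s X, H s r = 0 := by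
      rw [← lintegral_zero (μ := volume.restrict (Ico s X))]
      apply setLIntegral_congr_fun measurableSet_Ico
      exact fun r hr => if_neg (not_lt.2 hr.1)
    rw [h1, h2, add_zero, lintegral_const_mul]
    exact (hk.comp (measurable_const.sub measurable_id)).mul hV
  have hB : ∀ r ∈ Ioo (0:ℝ) X,
      ∫⁻ s in Ioo 0 X, H s r = V r * ∫⁻ s in Ioo r X, w s * k (s - r) := by
    intro r hr
    have hsplit : Ioo (0:ℝ) X = Ioc 0 r ∪ Ioo r X := (Ioc_union_Ioo_eq_Ioo hr.1.le hr.2).symm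
    rw [hsplit, lintegral_union measurableSet_Ioo (by rw [Set.disjoint_left]; rintro x ⟨_, h2⟩ ⟨h3, _⟩; exact absurd h3 (not_lt.2 h2))]
    have h1 : ∫⁻ s in Ioc 0 r, H s r = 0 := by
      rw [← lintegral_zero (μ := volume.restrict (Ioc 0 r))]
      apply setLIntegral_congr_fun measurableSet_Ioc
      exact fun s hs => if_neg (not_lt.2 hs.2)
    have h2 : ∫⁻ s in Ioo r X, H s r = ∫⁻ s in Ioo r X, (w s * k (s - r)) * V r := by
      apply setLIntegral_congr_fun measurableSet_Ioo
      refine fun s hs => ?_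
      rw [hH]
      simp only [if_pos hs.1]
      ring
    rw [h1, h2, zero_add, lintegral_mul_const, mul_comm]
    exact hw.mul (hk.comp (measurable_id.sub measurable_const))
  calc ∫⁻ s in Ioo 0 X, w s * ∫⁻ r in Ioo 0 s, k (s - r) * V r
      = ∫⁻ s in Ioo 0 X, ∫⁻ r in Ioo 0 X, H s r := by
        refine (setLIntegral_congr_fun measurableSet_Ioo ?_).symm
        exact hA
    _ = ∫⁻ r in Ioo 0 X, ∫⁻ s in Ioo 0 X, H s r :=
        lintegral_lintegral_swap hHm.aemeasurable
    _ = ∫⁻ r in Ioo 0 X, V r * ∫⁻ s in Ioo r X, w s * k (s - r) := by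
        apply setLIntegral_congr_fun measurableSet_Ioo
        exact hB

/-- Composition bound for power kernels. -/
lemma comp_kernel (α β r t : ℝ) (hα0 : 0 < α) (hα1 : α < 1) (hβ : 0 < β) (hrt : r < t) :
    ∫⁻ s in Ioo r t, ENNReal.ofReal ((t - s) ^ (α - 1)) * ENNReal.ofReal ((s - r) ^ (β - 1))
      ≤ ENNReal.ofReal ((1/β + 2 ^ β / α) / 2 ^ (α + β - 1))
        * ENNReal.ofReal ((t - r) ^ (α + β - 1)) := by
  set m := (r + t) / 2 with hm
  set h := (t - r) / 2 with hh
  have hhpos : 0 < h := by rw [hh]; linarith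
  have hrm : r < m := by rw [hm]; linarith
  have hmt : m < t := by rw [hm]; linarith
  have htm : t - m = h := by rw [hm, hh]; ring
  have hmr : m - r = h := by rw [hm, hh]; ring
  have hsplit : Ioo r t = Ioo r m ∪ Ico m t := (Ioo_union_Ico_eq_Ioo hrm hmt.le).symm
  rw [hsplit, lintegral_union measurableSet_Ico
    (by rw [Set.disjoint_left]; rintro x ⟨_, h2⟩ ⟨h3, _⟩; exact absurd h3 (not_le.2 h2))]
  have hI1 : ∫⁻ s in Ioo r m, ENNReal.ofReal ((t - s) ^ (α - 1)) * ENNReal.ofReal ((s - r) ^ (β - 1))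
      ≤ ENNReal.ofReal (h ^ (α + β - 1) / β) := by
    have step : ∫⁻ s in Ioo r m, ENNReal.ofReal ((t - s) ^ (α - 1)) * ENNReal.ofReal ((s - r) ^ (β - 1))
        ≤ ∫⁻ s in Ioo r m, ENNReal.ofReal (h ^ (α - 1)) * ENNReal.ofReal ((s - r) ^ (β - 1)) := by
      apply setLIntegral_mono_ae (by fun_prop)
      refine Filter.Eventually.of_forall fun s hs => ?_
      exact mul_le_mul_left (ENNReal.ofReal_le_ofReal
        (Real.rpow_le_rpow_of_nonpos hhpos (by rw [← htm]; linarith [hs.2]) (by linarith))) _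
    refine step.trans ?_
    rw [lintegral_const_mul _ (by fun_prop)]
    have : ∫⁻ s in Ioo r m, ENNReal.ofReal ((s - r) ^ (β - 1))
        = ∫⁻ τ in Ioo 0 h, ENNReal.ofReal (τ ^ (β - 1)) := by
      have := lintegral_Ioo_shift (fun τ => ENNReal.ofReal (τ ^ (β - 1))) r r m
      simpa [hmr] using this
    rw [this]
    calc ENNReal.ofReal (h ^ (α - 1)) * ∫⁻ τ in Ioo 0 h, ENNReal.ofReal (τ ^ (β - 1))
        ≤ ENNReal.ofReal (h ^ (α - 1)) * ENNReal.ofReal (h ^ β / β) := by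
          gcongr
          exact lintegral_Ioo_rpow β h hβ hhpos.le
      _ = ENNReal.ofReal (h ^ (α + β - 1) / β) := by
          rw [← ENNReal.ofReal_mul (Real.rpow_nonneg hhpos.le _)]
          congr 1
          rw [← mul_div_assoc, ← Real.rpow_add hhpos]
          ring_nf
  have hI2 : ∫⁻ s in Ico m t, ENNReal.ofReal ((t - s) ^ (α - 1)) * ENNReal.ofReal ((s - r) ^ (β - 1))
      ≤ ENNReal.ofReal (2 ^ β * h ^ (α + β - 1) / α) := by
    have key : ∀ s ∈ Ico m t, (s - r) ^ (β - 1) ≤ 2 ^ β * h ^ (β - 1) := by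
      intro s hs
      have h1 : h ≤ s - r := by rw [← hmr]; linarith [hs.1]
      have h2 : s - r ≤ 2 * h := by rw [hh]; linarith [hs.2]
      rcases le_or_gt β 1 with hb1 | hb1
      · calc (s - r) ^ (β - 1) ≤ h ^ (β - 1) :=
              Real.rpow_le_rpow_of_nonpos hhpos h1 (by linarith)
          _ ≤ 2 ^ β * h ^ (β - 1) :=
              le_mul_of_one_le_left (Real.rpow_nonneg hhpos.le _)
                (Real.one_le_rpow one_le_two hβ.le)
      · calc (s - r) ^ (β - 1) ≤ (2 * h) ^ (β - 1) :=
              Real.rpow_le_rpow (by linarith) h2 (by linarith)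
          _ = 2 ^ (β - 1) * h ^ (β - 1) := Real.mul_rpow (by norm_num) hhpos.le
          _ ≤ 2 ^ β * h ^ (β - 1) :=
              mul_le_mul_of_nonneg_right
                (Real.rpow_le_rpow_of_exponent_le one_le_two (by linarith))
                (Real.rpow_nonneg hhpos.le _)
    have step : ∫⁻ s in Ico m t, ENNReal.ofReal ((t - s) ^ (α - 1)) * ENNReal.ofReal ((s - r) ^ (β - 1))
        ≤ ∫⁻ s in Ico m t, ENNReal.ofReal ((t - s) ^ (α - 1)) * ENNReal.ofReal (2 ^ β * h ^ (β - 1)) := by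
      apply setLIntegral_mono_ae (by fun_prop)
      refine Filter.Eventually.of_forall fun s hs => ?_
      exact mul_le_mul_right (ENNReal.ofReal_le_ofReal (key s hs)) _
    refine step.trans ?_
    have hIcoIoo : ∫⁻ s in Ico m t, ENNReal.ofReal ((t - s) ^ (α - 1)) * ENNReal.ofReal (2 ^ β * h ^ (β - 1))
        = ∫⁻ s in Ioo m t, ENNReal.ofReal ((t - s) ^ (α - 1)) * ENNReal.ofReal (2 ^ β * h ^ (β - 1)) := by
      exact (setLIntegral_congr (Ioo_ae_eq_Ico (α := ℝ) (a := m) (b := t))).symm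
    rw [hIcoIoo]
    rw [lintegral_mul_const _ (by fun_prop)]
    have hrefl : ∫⁻ s in Ioo m t, ENNReal.ofReal ((t - s) ^ (α - 1))
        = ∫⁻ τ in Ioo 0 h, ENNReal.ofReal (τ ^ (α - 1)) := by
      have := lintegral_Ioo_reflect (fun τ => ENNReal.ofReal (τ ^ (α - 1))) t m t
      simpa [htm] using this
    rw [hrefl]
    calc (∫⁻ τ in Ioo 0 h, ENNReal.ofReal (τ ^ (α - 1))) * ENNReal.ofReal (2 ^ β * h ^ (β - 1))
        ≤ ENNReal.ofReal (h ^ α / α) * ENNReal.ofReal (2 ^ β * h ^ (β - 1)) := by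
          gcongr
          exact lintegral_Ioo_rpow α h hα0 hhpos.le
      _ = ENNReal.ofReal (2 ^ β * h ^ (α + β - 1) / α) := by
          rw [← ENNReal.ofReal_mul (by positivity)]
          congr 1
          rw [div_mul_eq_mul_div, mul_comm (h ^ α), mul_assoc, ← Real.rpow_add hhpos]
          ring_nf
  calc _ ≤ ENNReal.ofReal (h ^ (α + β - 1) / β) + ENNReal.ofReal (2 ^ β * h ^ (α + β - 1) / α) :=
        add_le_add hI1 hI2
    _ ≤ ENNReal.ofReal ((1/β + 2 ^ β / α) / 2 ^ (α + β - 1)) * ENNReal.ofReal ((t - r) ^ (α + β - 1)) := by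
        rw [← ENNReal.ofReal_add (by positivity) (by positivity),
          ← ENNReal.ofReal_mul (by positivity)]
        apply ENNReal.ofReal_le_ofReal
        have hexp : h ^ (α + β - 1) = (t - r) ^ (α + β - 1) / 2 ^ (α + β - 1) := by
          rw [hh, Real.div_rpow (by linarith) (by norm_num)]
        have h2p : (0:ℝ) < 2 ^ (α + β - 1) := Real.rpow_pos_of_pos (by norm_num) _
        rw [hexp]
        apply le_of_eq
        field_simp

lemma int_bound (T α b : ℝ) (hT : 0 < T) (hα0 : 0 < α) (hα1 : α < 1) (hb : 0 < b) :
    ∃ K : ℝ, 0 ≤ K ∧ ∀ (a : ℝ) (U : ℝ → ℝ≥0∞), 0 ≤ a → Measurable U →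
      (∫⁻ t in Ioo 0 T, U t) ≠ ∞ →
      (∀ᵐ t ∂(volume.restrict (Ioo 0 T)), U t ≤ ENNReal.ofReal a
          + ENNReal.ofReal (b / Real.Gamma α)
            * ∫⁻ s in Ioo 0 t, ENNReal.ofReal ((t - s) ^ (α - 1)) * U s) →
      ∫⁻ t in Ioo 0 T, U t ≤ ENNReal.ofReal (a * K) := by
  have hΓ : 0 < Real.Gamma α := Real.Gamma_pos_of_pos hα0
  set b' := b / Real.Gamma α with hb'def
  have hb' : 0 < b' := div_pos hb hΓ
  -- choose δ and lam
  set δ := (α / (4 * b')) ^ (α⁻¹) with hδdef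
  have hδ : 0 < δ := Real.rpow_pos_of_pos (by positivity) _
  have hδα : δ ^ α = α / (4 * b') := by
    rw [hδdef, ← Real.rpow_mul (by positivity), inv_mul_cancel₀ hα0.ne', Real.rpow_one]
  set R := 4 * b' * T * δ ^ (α - 1) with hRdef
  have hR : 0 < R := by
    have := Real.rpow_pos_of_pos hδ (α - 1)
    positivity
  set lam := Real.log (max 1 R) / δ with hlamdef
  have hlam : 0 ≤ lam := div_nonneg (Real.log_nonneg (le_max_left _ _)) hδ.le
  have hexplam : Real.exp (-(lam * δ)) * R ≤ 1 := by
    have hld : lam * δ = Real.log (max 1 R) := div_mul_cancel₀ _ hδ.ne'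
    rw [hld, Real.exp_neg, Real.exp_log (lt_of_lt_of_le one_pos (le_max_left 1 R))]
    rw [inv_mul_le_iff₀ (lt_of_lt_of_le one_pos (le_max_left 1 R)), mul_one]
    exact le_max_right 1 R
  set ρ := δ ^ α / α + Real.exp (-(lam * δ)) * δ ^ (α - 1) * T with hρdef
  have hρkey : b' * ρ ≤ 1 / 2 := by
    have h1 : b' * (δ ^ α / α) = 1 / 4 := by
      rw [hδα]; field_simp
    have h2 : b' * (Real.exp (-(lam * δ)) * δ ^ (α - 1) * T) ≤ 1 / 4 := by
      have hd : 0 < δ ^ (α - 1) := Real.rpow_pos_of_pos hδ _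
      have key : Real.exp (-(lam * δ)) * δ ^ (α - 1) * T ≤ δ ^ (α - 1) * T / R := by
        rw [le_div_iff₀ hR]
        calc Real.exp (-(lam * δ)) * δ ^ (α - 1) * T * R
            = (δ ^ (α - 1) * T) * (Real.exp (-(lam * δ)) * R) := by ring
          _ ≤ (δ ^ (α - 1) * T) * 1 := mul_le_mul_of_nonneg_left hexplam (by positivity)
          _ = δ ^ (α - 1) * T := mul_one _
      have hfrac : δ ^ (α - 1) * T / R = 1 / (4 * b') := by
        rw [hRdef]
        field_simp
      calc b' * (Real.exp (-(lam * δ)) * δ ^ (α - 1) * T) ≤ b' * (δ ^ (α - 1) * T / R) :=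
            mul_le_mul_of_nonneg_left key hb'.le
        _ = b' * (1 / (4 * b')) := by rw [hfrac]
        _ = 1 / 4 := by field_simp
    calc b' * ρ = b' * (δ ^ α / α) + b' * (Real.exp (-(lam * δ)) * δ ^ (α - 1) * T) := by
          rw [hρdef]; ring
      _ ≤ 1 / 4 + 1 / 4 := add_le_add h1.le h2
      _ = 1 / 2 := by norm_num
  have hρ0 : 0 ≤ ρ := by
    have := Real.rpow_pos_of_pos hδ α
    have := Real.rpow_pos_of_pos hδ (α - 1)
    have := Real.exp_pos (-(lam * δ))
    positivity
  -- the ρ integral bound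
  have hρint : ∫⁻ τ in Ioo 0 T, ENNReal.ofReal (Real.exp (-(lam * τ)) * τ ^ (α - 1))
      ≤ ENNReal.ofReal ρ := by
    set T' := max T δ with hT'def
    have hsub : Ioo (0:ℝ) T ⊆ Ioo 0 δ ∪ Ico δ T' := by
      intro x hx
      rcases lt_or_ge x δ with h | h
      · exact Or.inl ⟨hx.1, h⟩
      · exact Or.inr ⟨h, lt_of_lt_of_le hx.2 (le_max_left _ _)⟩
    calc ∫⁻ τ in Ioo 0 T, ENNReal.ofReal (Real.exp (-(lam * τ)) * τ ^ (α - 1))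
        ≤ ∫⁻ τ in Ioo 0 δ ∪ Ico δ T', ENNReal.ofReal (Real.exp (-(lam * τ)) * τ ^ (α - 1)) :=
          lintegral_mono_set hsub
      _ ≤ (∫⁻ τ in Ioo 0 δ, ENNReal.ofReal (Real.exp (-(lam * τ)) * τ ^ (α - 1)))
          + ∫⁻ τ in Ico δ T', ENNReal.ofReal (Real.exp (-(lam * τ)) * τ ^ (α - 1)) :=
          lintegral_union_le _ _ _
      _ ≤ ENNReal.ofReal (δ ^ α / α) + ENNReal.ofReal (Real.exp (-(lam * δ)) * δ ^ (α - 1) * T) := by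
          apply add_le_add
          · calc ∫⁻ τ in Ioo 0 δ, ENNReal.ofReal (Real.exp (-(lam * τ)) * τ ^ (α - 1))
                ≤ ∫⁻ τ in Ioo 0 δ, ENNReal.ofReal (τ ^ (α - 1)) := by
                  apply setLIntegral_mono_ae (by fun_prop)
                  refine Filter.Eventually.of_forall fun τ hτ => ?_
                  apply ENNReal.ofReal_le_ofReal
                  calc Real.exp (-(lam * τ)) * τ ^ (α - 1)
                      ≤ 1 * τ ^ (α - 1) := by
                        apply mul_le_mul_of_nonneg_right _ (Real.rpow_nonneg hτ.1.le _)
                        rw [Real.exp_le_one_iff]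
                        have : 0 ≤ lam * τ := mul_nonneg hlam hτ.1.le
                        linarith
                    _ = τ ^ (α - 1) := one_mul _
              _ ≤ ENNReal.ofReal (δ ^ α / α) := lintegral_Ioo_rpow α δ hα0 hδ.le
          · calc ∫⁻ τ in Ico δ T', ENNReal.ofReal (Real.exp (-(lam * τ)) * τ ^ (α - 1))
                ≤ ∫⁻ x in Ico δ T', ENNReal.ofReal (Real.exp (-(lam * δ)) * δ ^ (α - 1)) := by
                  apply setLIntegral_mono_ae (by fun_prop)
                  refine Filter.Eventually.of_forall fun τ hτ => ?_
                  apply ENNReal.ofReal_le_ofReal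
                  apply mul_le_mul
                  · apply Real.exp_le_exp.2
                    have : lam * δ ≤ lam * τ := mul_le_mul_of_nonneg_left hτ.1 hlam
                    linarith
                  · exact Real.rpow_le_rpow_of_nonpos hδ hτ.1 (by linarith)
                  · exact Real.rpow_nonneg (le_trans hδ.le hτ.1) _
                  · exact (Real.exp_pos _).le
              _ = ENNReal.ofReal (Real.exp (-(lam * δ)) * δ ^ (α - 1)) * volume (Ico δ T') := by
                  rw [setLIntegral_const]
              _ ≤ ENNReal.ofReal (Real.exp (-(lam * δ)) * δ ^ (α - 1) * T) := by
                  rw [Real.volume_Ico]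
                  rw [← ENNReal.ofReal_mul (by positivity)]
                  apply ENNReal.ofReal_le_ofReal
                  apply mul_le_mul_of_nonneg_left _ (by positivity)
                  rw [hT'def]
                  rcases le_total T δ with h | h
                  · simp [max_eq_right h]; linarith
                  · rw [max_eq_left h]; linarith
      _ = ENNReal.ofReal ρ := by rw [hρdef, ENNReal.ofReal_add (by positivity) (by positivity)]
  -- now the main argument
  refine ⟨2 * T * Real.exp (lam * T), by positivity, fun a U ha hU hfin hbase => ?_⟩
  set S := Ioo (0:ℝ) T
  set w : ℝ → ℝ≥0∞ := fun t => ENNReal.ofReal (Real.exp (-(lam * t))) with hwdef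
  have hwm : Measurable w := by fun_prop
  have hw1 : ∀ t ∈ S, w t ≤ 1 := by
    intro t ht
    rw [hwdef]
    simp only
    rw [← ENNReal.ofReal_one]
    apply ENNReal.ofReal_le_ofReal
    rw [Real.exp_le_one_iff]
    have : 0 ≤ lam * t := mul_nonneg hlam ht.1.le
    linarith
  set J := ∫⁻ t in S, w t * U t with hJdef
  have hJfin : J ≠ ∞ := by
    apply ne_top_of_le_ne_top hfin
    apply setLIntegral_mono_ae (by fun_prop)
    exact Filter.Eventually.of_forall fun t ht => by
        calc w t * U t ≤ 1 * U t := mul_le_mul_left (hw1 t ht) _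
          _ = U t := one_mul _
  set k : ℝ → ℝ≥0∞ := fun τ => ENNReal.ofReal (τ ^ (α - 1)) with hkdef
  have hkm : Measurable k := by fun_prop
  set B' := ENNReal.ofReal b' with hB'def
  have hchain : J ≤ ENNReal.ofReal a * ENNReal.ofReal T + ENNReal.ofReal (1/2) * J := by
    calc J ≤ ∫⁻ t in S, w t * (ENNReal.ofReal a + B' * ∫⁻ s in Ioo 0 t, k (t - s) * U s) := by
          apply lintegral_mono_ae
          filter_upwards [hbase] with t ht
          exact mul_le_mul_right ht _
      _ = (∫⁻ t in S, w t * ENNReal.ofReal a)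
          + ∫⁻ t in S, w t * (B' * ∫⁻ s in Ioo 0 t, k (t - s) * U s) := by
          rw [← lintegral_add_left (by fun_prop)]
          congr 1; ext t; rw [mul_add]
      _ ≤ ENNReal.ofReal a * ENNReal.ofReal T + ENNReal.ofReal (1/2) * J := by
          apply add_le_add
          · calc ∫⁻ t in S, w t * ENNReal.ofReal a
                ≤ ∫⁻ x in S, ENNReal.ofReal a := by
                  apply setLIntegral_mono_ae (by fun_prop)
                  refine Filter.Eventually.of_forall fun t ht => ?_
                  calc w t * ENNReal.ofReal a ≤ 1 * ENNReal.ofReal a :=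
                        mul_le_mul_left (hw1 t ht) _
                    _ = ENNReal.ofReal a := one_mul _
              _ = ENNReal.ofReal a * volume S := setLIntegral_const S _
              _ = ENNReal.ofReal a * ENNReal.ofReal T := by
                  rw [show S = Ioo (0:ℝ) T from rfl, Real.volume_Ioo, sub_zero]
          · have hswap : ∫⁻ t in S, w t * ∫⁻ s in Ioo 0 t, k (t - s) * U s
                = ∫⁻ r in S, U r * ∫⁻ t in Ioo r T, w t * k (t - r) :=
              swap_lemma T hT w k U hwm hkm hU
            calc ∫⁻ t in S, w t * (B' * ∫⁻ s in Ioo 0 t, k (t - s) * U s)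
                = B' * ∫⁻ t in S, w t * ∫⁻ s in Ioo 0 t, k (t - s) * U s := by
                  rw [← lintegral_const_mul' _ _ ENNReal.ofReal_ne_top]
                  congr 1; ext t; ring
              _ = B' * ∫⁻ r in S, U r * ∫⁻ t in Ioo r T, w t * k (t - r) := by rw [hswap]
              _ ≤ B' * ∫⁻ r in S, U r * (w r * ENNReal.ofReal ρ) := by
                  apply mul_le_mul_right
                  apply setLIntegral_mono_ae (by fun_prop)
                  refine Filter.Eventually.of_forall fun r hr => ?_
                  apply mul_le_mul_right
                  -- inner kernel bound
                  calc ∫⁻ t in Ioo r T, w t * k (t - r)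
                      = ∫⁻ t in Ioo r T, ENNReal.ofReal (Real.exp (-(lam * r)))
                          * ENNReal.ofReal (Real.exp (-(lam * (t - r))) * (t - r) ^ (α - 1)) := by
                        apply setLIntegral_congr_fun measurableSet_Ioo
                        refine fun t ht => ?_
                        rw [hwdef, hkdef]
                        simp only
                        rw [← ENNReal.ofReal_mul (Real.exp_pos _).le,
                          ← ENNReal.ofReal_mul (Real.exp_pos _).le, ← mul_assoc,
                          ← Real.exp_add]
                        congr 2
                        ring_nf
                    _ = ENNReal.ofReal (Real.exp (-(lam * r)))
                        * ∫⁻ t in Ioo r T, ENNReal.ofReal (Real.exp (-(lam * (t - r))) * (t - r) ^ (α - 1)) := by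
                        rw [lintegral_const_mul _ (by fun_prop)]
                    _ = ENNReal.ofReal (Real.exp (-(lam * r)))
                        * ∫⁻ τ in Ioo 0 (T - r), ENNReal.ofReal (Real.exp (-(lam * τ)) * τ ^ (α - 1)) := by
                        congr 1
                        have := lintegral_Ioo_shift
                          (fun τ => ENNReal.ofReal (Real.exp (-(lam * τ)) * τ ^ (α - 1))) r r T
                        simpa using this
                    _ ≤ ENNReal.ofReal (Real.exp (-(lam * r))) * ENNReal.ofReal ρ := by
                        apply mul_le_mul_right
                        refine le_trans (lintegral_mono_set ?_) hρint
                        exact Ioo_subset_Ioo le_rfl (by linarith [hr.1])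
                    _ = w r * ENNReal.ofReal ρ := rfl
              _ = B' * ENNReal.ofReal ρ * J := by
                  rw [hJdef, mul_assoc]
                  congr 1
                  rw [← lintegral_const_mul' _ _ ENNReal.ofReal_ne_top]
                  congr 1; ext r; ring
              _ ≤ ENNReal.ofReal (1/2) * J := by
                  apply mul_le_mul_left
                  rw [hB'def, ← ENNReal.ofReal_mul hb'.le]
                  exact ENNReal.ofReal_le_ofReal hρkey
  -- solve J ≤ X + J/2
  have hJle : J ≤ 2 * (ENNReal.ofReal a * ENNReal.ofReal T) := by
    have h2 : (2:ℝ≥0∞) * (ENNReal.ofReal (1/2) * J) = J := by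
      rw [← mul_assoc, show (2:ℝ≥0∞) = ENNReal.ofReal 2 by simp,
        ← ENNReal.ofReal_mul (by norm_num)]
      norm_num
    have := mul_le_mul_right hchain 2
    rw [mul_add, h2] at this
    have h3 : (2:ℝ≥0∞) * J = J + J := two_mul J
    rw [h3] at this
    exact (ENNReal.add_le_add_iff_right hJfin).1 this
  -- conclude
  calc ∫⁻ t in S, U t ≤ ∫⁻ t in S, ENNReal.ofReal (Real.exp (lam * T)) * (w t * U t) := by
        apply setLIntegral_mono_ae (by fun_prop)
        refine Filter.Eventually.of_forall fun t ht => ?_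
        rw [← mul_assoc, hwdef]
        simp only
        rw [← ENNReal.ofReal_mul (Real.exp_pos _).le, ← Real.exp_add]
        nth_rewrite 1 [← one_mul (U t)]
        apply mul_le_mul_left
        rw [← ENNReal.ofReal_one]
        apply ENNReal.ofReal_le_ofReal
        rw [Real.one_le_exp_iff]
        have : lam * t ≤ lam * T := mul_le_mul_of_nonneg_left ht.2.le hlam
        linarith
    _ = ENNReal.ofReal (Real.exp (lam * T)) * J :=
        lintegral_const_mul' _ _ ENNReal.ofReal_ne_top
    _ ≤ ENNReal.ofReal (Real.exp (lam * T)) * (2 * (ENNReal.ofReal a * ENNReal.ofReal T)) :=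
        mul_le_mul_right hJle _
    _ = ENNReal.ofReal (a * (2 * T * Real.exp (lam * T))) := by
        rw [show (2:ℝ≥0∞) = ENNReal.ofReal 2 by simp, ← ENNReal.ofReal_mul (by positivity),
          ← ENNReal.ofReal_mul (by positivity), ← ENNReal.ofReal_mul (by positivity)]
        congr 1
        ring

lemma iter_bound (T α b : ℝ) (hT : 0 < T) (hα0 : 0 < α) (hα1 : α < 1) (hb : 0 < b) (n : ℕ) :
    ∃ D E : ℝ, 0 ≤ D ∧ 0 ≤ E ∧ ∀ (a : ℝ) (U : ℝ → ℝ≥0∞), 0 ≤ a → Measurable U →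
      (∀ᵐ t ∂(volume.restrict (Ioo 0 T)), U t ≤ ENNReal.ofReal a
          + ENNReal.ofReal (b / Real.Gamma α)
            * ∫⁻ s in Ioo 0 t, ENNReal.ofReal ((t - s) ^ (α - 1)) * U s) →
      (∀ᵐ t ∂(volume.restrict (Ioo 0 T)), U t ≤ ENNReal.ofReal (a * D)
          + ENNReal.ofReal E
            * ∫⁻ s in Ioo 0 t, ENNReal.ofReal ((t - s) ^ (((n:ℝ) + 1) * α - 1)) * U s) := by
  have hΓ : 0 < Real.Gamma α := Real.Gamma_pos_of_pos hα0
  have hb' : 0 < b / Real.Gamma α := div_pos hb hΓ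
  set b' := b / Real.Gamma α
  induction n with
  | zero =>
    refine ⟨1, b', zero_le_one, hb'.le, fun a U ha hU hbase => ?_⟩
    filter_upwards [hbase] with t ht
    calc U t ≤ ENNReal.ofReal a
          + ENNReal.ofReal b' * ∫⁻ s in Ioo 0 t, ENNReal.ofReal ((t - s) ^ (α - 1)) * U s := ht
      _ = ENNReal.ofReal (a * 1)
          + ENNReal.ofReal b'
            * ∫⁻ s in Ioo 0 t, ENNReal.ofReal ((t - s) ^ ((((0:ℕ):ℝ) + 1) * α - 1)) * U s := by
          norm_num
  | succ n ih =>
    obtain ⟨D, E, hD, hE, hind⟩ := ih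
    set β := ((n:ℝ) + 1) * α with hβdef
    have hβ : 0 < β := by positivity
    set cc := (1/β + 2 ^ β / α) / 2 ^ (α + β - 1) with hccdef
    have hcc : 0 ≤ cc := by positivity
    refine ⟨1 + b' * D * (T ^ α / α), b' * E * cc, by positivity, by positivity,
      fun a U ha hU hbase => ?_⟩
    have hQ := hind a U ha hU hbase
    filter_upwards [hbase, ae_restrict_mem measurableSet_Ioo] with t hbt htS
    -- bound the inner integral
    have hQt : ∀ᵐ s ∂(volume.restrict (Ioo 0 t)), U s ≤ ENNReal.ofReal (a * D)
        + ENNReal.ofReal E * ∫⁻ r in Ioo 0 s, ENNReal.ofReal ((s - r) ^ (β - 1)) * U r := by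
      exact ae_restrict_of_ae_restrict_of_subset (Ioo_subset_Ioo le_rfl htS.2.le) hQ
    have step1 : ∫⁻ s in Ioo 0 t, ENNReal.ofReal ((t - s) ^ (α - 1)) * U s
        ≤ ∫⁻ s in Ioo 0 t, ENNReal.ofReal ((t - s) ^ (α - 1)) * (ENNReal.ofReal (a * D)
            + ENNReal.ofReal E * ∫⁻ r in Ioo 0 s, ENNReal.ofReal ((s - r) ^ (β - 1)) * U r) := by
      apply lintegral_mono_ae
      filter_upwards [hQt] with s hs
      exact mul_le_mul_right hs _
    have step2 : ∫⁻ s in Ioo 0 t, ENNReal.ofReal ((t - s) ^ (α - 1)) * (ENNReal.ofReal (a * D)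
            + ENNReal.ofReal E * ∫⁻ r in Ioo 0 s, ENNReal.ofReal ((s - r) ^ (β - 1)) * U r)
        = (∫⁻ s in Ioo 0 t, ENNReal.ofReal ((t - s) ^ (α - 1)) * ENNReal.ofReal (a * D))
          + ENNReal.ofReal E * ∫⁻ s in Ioo 0 t, ENNReal.ofReal ((t - s) ^ (α - 1))
              * ∫⁻ r in Ioo 0 s, ENNReal.ofReal ((s - r) ^ (β - 1)) * U r := by
      rw [← lintegral_const_mul' _ _ ENNReal.ofReal_ne_top,
        ← lintegral_add_left (by fun_prop)]
      congr 1; ext s; ring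
    -- term 1
    have hterm1 : ∫⁻ s in Ioo 0 t, ENNReal.ofReal ((t - s) ^ (α - 1)) * ENNReal.ofReal (a * D)
        ≤ ENNReal.ofReal (a * D) * ENNReal.ofReal (T ^ α / α) := by
      rw [lintegral_mul_const' _ _ ENNReal.ofReal_ne_top, mul_comm]
      apply mul_le_mul_right
      have hrefl : ∫⁻ s in Ioo 0 t, ENNReal.ofReal ((t - s) ^ (α - 1))
          = ∫⁻ τ in Ioo 0 t, ENNReal.ofReal (τ ^ (α - 1)) := by
        have := lintegral_Ioo_reflect (fun τ => ENNReal.ofReal (τ ^ (α - 1))) t 0 t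
        simpa using this
      rw [hrefl]
      refine le_trans (lintegral_Ioo_rpow α t hα0 htS.1.le) ?_
      apply ENNReal.ofReal_le_ofReal
      gcongr
      all_goals first
        | exact htS.1.le
        | exact htS.2.le
        | positivity
        | linarith [htS.1, htS.2]
    -- term 2
    have hterm2 : ∫⁻ s in Ioo 0 t, ENNReal.ofReal ((t - s) ^ (α - 1))
            * ∫⁻ r in Ioo 0 s, ENNReal.ofReal ((s - r) ^ (β - 1)) * U r
        ≤ ENNReal.ofReal cc * ∫⁻ r in Ioo 0 t, ENNReal.ofReal ((t - r) ^ (α + β - 1)) * U r := by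
      calc ∫⁻ s in Ioo 0 t, ENNReal.ofReal ((t - s) ^ (α - 1))
              * ∫⁻ r in Ioo 0 s, ENNReal.ofReal ((s - r) ^ (β - 1)) * U r
          = ∫⁻ r in Ioo 0 t, U r * ∫⁻ s in Ioo r t,
              ENNReal.ofReal ((t - s) ^ (α - 1)) * ENNReal.ofReal ((s - r) ^ (β - 1)) :=
            swap_lemma t htS.1 (fun s => ENNReal.ofReal ((t - s) ^ (α - 1)))
              (fun τ => ENNReal.ofReal (τ ^ (β - 1))) U (by fun_prop) (by fun_prop) hU
        _ ≤ ∫⁻ r in Ioo 0 t, U r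
              * (ENNReal.ofReal cc * ENNReal.ofReal ((t - r) ^ (α + β - 1))) := by
            apply setLIntegral_mono_ae (by fun_prop)
            refine Filter.Eventually.of_forall fun r hr => ?_
            exact mul_le_mul_right (comp_kernel α β r t hα0 hα1 hβ hr.2) _
        _ = ENNReal.ofReal cc * ∫⁻ r in Ioo 0 t, ENNReal.ofReal ((t - r) ^ (α + β - 1)) * U r := by
            rw [← lintegral_const_mul' _ _ ENNReal.ofReal_ne_top]
            congr 1; ext r; ring
    -- assemble
    have hcast : (((n:ℕ)+1 : ℕ):ℝ) + 1 = (n:ℝ) + 1 + 1 := by push_cast; ring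
    have hexp : ((((n:ℕ)+1 : ℕ):ℝ) + 1) * α - 1 = α + β - 1 := by
      rw [hcast, hβdef]; ring
    rw [hexp]
    set I := ∫⁻ r in Ioo 0 t, ENNReal.ofReal ((t - r) ^ (α + β - 1)) * U r with hIdef
    calc U t ≤ ENNReal.ofReal a
          + ENNReal.ofReal b' * ∫⁻ s in Ioo 0 t, ENNReal.ofReal ((t - s) ^ (α - 1)) * U s := hbt
      _ ≤ ENNReal.ofReal a + ENNReal.ofReal b'
            * (ENNReal.ofReal (a * D) * ENNReal.ofReal (T ^ α / α)
              + ENNReal.ofReal E * (ENNReal.ofReal cc * I)) := by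
          apply add_le_add_right
          apply mul_le_mul_right
          refine le_trans step1 ?_
          rw [step2]
          exact add_le_add hterm1 (mul_le_mul_right hterm2 _)
      _ = ENNReal.ofReal (a * (1 + b' * D * (T ^ α / α))) + ENNReal.ofReal (b' * E * cc) * I := by
          have e1 : ENNReal.ofReal b' * (ENNReal.ofReal (a * D) * ENNReal.ofReal (T ^ α / α))
              = ENNReal.ofReal (a * (b' * D * (T ^ α / α))) := by
            rw [← ENNReal.ofReal_mul (by positivity), ← ENNReal.ofReal_mul hb'.le]
            congr 1; ring
          have e2 : ENNReal.ofReal a + ENNReal.ofReal (a * (b' * D * (T ^ α / α)))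
              = ENNReal.ofReal (a * (1 + b' * D * (T ^ α / α))) := by
            rw [← ENNReal.ofReal_add ha (by positivity)]
            congr 1; ring
          have e3 : ENNReal.ofReal b' * (ENNReal.ofReal E * (ENNReal.ofReal cc * I))
              = ENNReal.ofReal (b' * E * cc) * I := by
            rw [ENNReal.ofReal_mul (by positivity : (0:ℝ) ≤ b' * E), ENNReal.ofReal_mul hb'.le]
            ring
          rw [mul_add, e1, e3, ← add_assoc, e2]

/-- Fractional Grönwall–Bellman inequality (base form). -/
theorem fractional_gronwall_bellman
    (T α b : ℝ) (hT : 0 < T) (hα : α ∈ Set.Ioo (0:ℝ) 1) (hb : 0 < b) :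
    ∃ C : ℝ, ∀ (a : ℝ) (u : ℝ → ℝ), 0 < a →
      MeasureTheory.IntegrableOn u (Set.Ioo 0 T) →
      (∀ᵐ t ∂(MeasureTheory.volume.restrict (Set.Ioo 0 T)), 0 ≤ u t) →
      (∀ᵐ t ∂(MeasureTheory.volume.restrict (Set.Ioo 0 T)),
        u t ≤ a + b * conv (rlKernel α) u t) →
      (∀ᵐ t ∂(MeasureTheory.volume.restrict (Set.Ioo 0 T)), u t ≤ a * C) := by
  obtain ⟨hα0, hα1⟩ := hα
  have hΓ : 0 < Real.Gamma α := Real.Gamma_pos_of_pos hα0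
  obtain ⟨K, hK, hKbound⟩ := int_bound T α b hT hα0 hα1 hb
  obtain ⟨n, hn⟩ := exists_nat_ge (1/α)
  obtain ⟨D, E, hD, hE, hDE⟩ := iter_bound T α b hT hα0 hα1 hb n
  set e := ((n:ℝ) + 1) * α - 1 with hedef
  have he : 0 ≤ e := by
    rw [div_le_iff₀ hα0] at hn
    rw [hedef]
    nlinarith
  refine ⟨D + E * (T ^ e * K), fun a u ha hu hnn hineq => ?_⟩
  set S := Ioo (0:ℝ) T with hSdef
  -- measurable representative
  set v := (hu.aestronglyMeasurable.aemeasurable).mk u with hvdef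
  have hvm : Measurable v := (hu.aestronglyMeasurable.aemeasurable).measurable_mk
  have hvu : u =ᵐ[volume.restrict S] v := (hu.aestronglyMeasurable.aemeasurable).ae_eq_mk
  set U : ℝ → ℝ≥0∞ := fun t => ENNReal.ofReal (v t) with hUdef
  have hU : Measurable U := ENNReal.measurable_ofReal.comp hvm
  -- finiteness
  have hfin : (∫⁻ t in S, U t) ≠ ∞ := by
    have h1 : ∫⁻ t in S, U t = ∫⁻ t in S, ENNReal.ofReal (u t) :=
      lintegral_congr_ae (hvu.mono fun t ht => by rw [hUdef]; simp only; rw [ht])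
    rw [h1]
    refine ne_top_of_le_ne_top ?_ (lintegral_mono fun t => Real.ofReal_le_enorm (u t))
    exact hu.2.ne
  -- the base inequality in ℝ≥0∞ form
  have hbase : ∀ᵐ t ∂(volume.restrict S), U t ≤ ENNReal.ofReal a
      + ENNReal.ofReal (b / Real.Gamma α)
        * ∫⁻ s in Ioo 0 t, ENNReal.ofReal ((t - s) ^ (α - 1)) * U s := by
    filter_upwards [hineq, hvu, ae_restrict_mem measurableSet_Ioo] with t hut htv htS
    have h0t : Ioo (0:ℝ) t ⊆ S := Ioo_subset_Ioo le_rfl htS.2.le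
    have hnn_t : 0 ≤ᵐ[volume.restrict (Ioo 0 t)] u :=
      ae_restrict_of_ae_restrict_of_subset h0t hnn
    have hvu_t : u =ᵐ[volume.restrict (Ioo 0 t)] v :=
      ae_restrict_of_ae_restrict_of_subset h0t hvu
    have hmeas_t : AEStronglyMeasurable (fun s => rlKernel α (t - s) * u s)
        (volume.restrict (Ioo 0 t)) := by
      apply AEStronglyMeasurable.mul
      · exact Measurable.aestronglyMeasurable (by unfold rlKernel; fun_prop)
      · exact hu.aestronglyMeasurable.mono_measure (Measure.restrict_mono h0t le_rfl)
    have hnnprod : 0 ≤ᵐ[volume.restrict (Ioo 0 t)] fun s => rlKernel α (t - s) * u s := by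
      filter_upwards [hnn_t, ae_restrict_mem measurableSet_Ioo] with s hs hsmem
      apply mul_nonneg _ hs
      exact div_nonneg (Real.rpow_nonneg (by linarith [hsmem.2]) _) hΓ.le
    have hconv : conv (rlKernel α) u t = ∫ s in Ioo 0 t, rlKernel α (t - s) * u s := by
      unfold conv
      rw [intervalIntegral.integral_of_le htS.1.le, integral_Ioc_eq_integral_Ioo]
    have hconv2 : ∫ s in Ioo 0 t, rlKernel α (t - s) * u s
        = (∫⁻ s in Ioo 0 t, ENNReal.ofReal (rlKernel α (t - s) * u s)).toReal :=
      integral_eq_lintegral_of_nonneg_ae hnnprod hmeas_t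
    have hlint_eq : ∫⁻ s in Ioo 0 t, ENNReal.ofReal (rlKernel α (t - s) * u s)
        = ENNReal.ofReal (1 / Real.Gamma α)
          * ∫⁻ s in Ioo 0 t, ENNReal.ofReal ((t - s) ^ (α - 1)) * U s := by
      rw [← lintegral_const_mul' _ _ ENNReal.ofReal_ne_top]
      apply lintegral_congr_ae
      filter_upwards [hvu_t, ae_restrict_mem measurableSet_Ioo] with s hsv hsmem
      rw [show rlKernel α (t - s) * u s
          = ((t - s) ^ (α - 1)) * ((1/Real.Gamma α) * u s) by unfold rlKernel; ring,
        ENNReal.ofReal_mul (Real.rpow_nonneg (by linarith [hsmem.2]) _),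
        ENNReal.ofReal_mul (by positivity : (0:ℝ) ≤ 1/Real.Gamma α), hsv]
      rw [hUdef]
      simp only
      ring
    calc U t = ENNReal.ofReal (u t) := (congrArg ENNReal.ofReal htv).symm
      _ ≤ ENNReal.ofReal (a + b * conv (rlKernel α) u t) := ENNReal.ofReal_le_ofReal hut
      _ ≤ ENNReal.ofReal a + ENNReal.ofReal (b * conv (rlKernel α) u t) :=
          ENNReal.ofReal_add_le
      _ = ENNReal.ofReal a + ENNReal.ofReal b * ENNReal.ofReal (conv (rlKernel α) u t) := by
          rw [ENNReal.ofReal_mul hb.le]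
      _ ≤ ENNReal.ofReal a + ENNReal.ofReal b * (ENNReal.ofReal (1 / Real.Gamma α)
            * ∫⁻ s in Ioo 0 t, ENNReal.ofReal ((t - s) ^ (α - 1)) * U s) := by
          apply add_le_add_right
          apply mul_le_mul_right
          rw [hconv, hconv2]
          exact le_trans ENNReal.ofReal_toReal_le (le_of_eq hlint_eq)
      _ = ENNReal.ofReal a + ENNReal.ofReal (b / Real.Gamma α)
            * ∫⁻ s in Ioo 0 t, ENNReal.ofReal ((t - s) ^ (α - 1)) * U s := by
          rw [← mul_assoc, ← ENNReal.ofReal_mul hb.le, mul_one_div]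
  -- apply the two main lemmas
  have hint : ∫⁻ t in S, U t ≤ ENNReal.ofReal (a * K) := hKbound a U ha.le hU hfin hbase
  have hiter := hDE a U ha.le hU hbase
  filter_upwards [hiter, ae_restrict_mem measurableSet_Ioo, hvu, hnn]
    with t hit htS htv htnn
  have hker : ∫⁻ s in Ioo 0 t, ENNReal.ofReal ((t - s) ^ e) * U s
      ≤ ENNReal.ofReal (T ^ e) * ENNReal.ofReal (a * K) := by
    calc ∫⁻ s in Ioo 0 t, ENNReal.ofReal ((t - s) ^ e) * U s
        ≤ ∫⁻ s in Ioo 0 t, ENNReal.ofReal (T ^ e) * U s := by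
          apply setLIntegral_mono_ae (by fun_prop)
          refine Filter.Eventually.of_forall fun s hs => ?_
          apply mul_le_mul_left
          apply ENNReal.ofReal_le_ofReal
          exact Real.rpow_le_rpow (by linarith [hs.2]) (by linarith [hs.1, htS.2]) he
      _ = ENNReal.ofReal (T ^ e) * ∫⁻ s in Ioo 0 t, U s :=
          lintegral_const_mul' _ _ ENNReal.ofReal_ne_top
      _ ≤ ENNReal.ofReal (T ^ e) * ∫⁻ s in S, U s :=
          mul_le_mul_right (lintegral_mono_set (Ioo_subset_Ioo le_rfl htS.2.le)) _
      _ ≤ ENNReal.ofReal (T ^ e) * ENNReal.ofReal (a * K) := mul_le_mul_right hint _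
  have hfinal : U t ≤ ENNReal.ofReal (a * (D + E * (T ^ e * K))) := by
    calc U t ≤ ENNReal.ofReal (a * D)
          + ENNReal.ofReal E * ∫⁻ s in Ioo 0 t, ENNReal.ofReal ((t - s) ^ e) * U s := hit
      _ ≤ ENNReal.ofReal (a * D)
          + ENNReal.ofReal E * (ENNReal.ofReal (T ^ e) * ENNReal.ofReal (a * K)) :=
          add_le_add_right (mul_le_mul_right hker _) _
      _ = ENNReal.ofReal (a * (D + E * (T ^ e * K))) := by
          rw [← ENNReal.ofReal_mul (by positivity : (0:ℝ) ≤ T ^ e),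
            ← ENNReal.ofReal_mul hE, ← ENNReal.ofReal_add (by positivity) (by positivity)]
          congr 1
          ring
  have hCnn : (0:ℝ) ≤ a * (D + E * (T ^ e * K)) := by
    have : (0:ℝ) ≤ T ^ e := Real.rpow_nonneg hT.le _
    positivity
  have : ENNReal.ofReal (u t) ≤ ENNReal.ofReal (a * (D + E * (T ^ e * K))) := by
    rw [htv]
    exact hfinal
  exact (ENNReal.ofReal_le_ofReal_iff hCnn).1 this
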